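/- arXiv:1604.08546 — 2 statements merged into one kernel-verified Lean document; each statement's English description precedes it below -/
import Mathlib

section
/- Let C ⊆ ℝʳ be a compact convex set, let (b_n) ⊆ C converge to b ∈ C, and for a fixed matrix M and each c ∈ C define ℍ(c) = {ν ∈ ℝˢ : ν ≥ 0, Mν = c}. Assume ℍ(c) is nonempty and contained in the probability simplex for all c ∈ C. If F̄ is a continuous function on the probability simplex and F(c) = max{F̄(ν) : ν ∈ ℍ(c)}, then F is continuous at b; that is, F(b_n) → F(b). -/
open Finset

/-- Conic Carathéodory: any nonnegative combination of `w j`'s equals a nonnegative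
combination whose support is linearly independent. -/
lemma conic_carath {E : Type*} [AddCommGroup E] [Module ℝ E] {s : ℕ} (w : Fin s → E) :
    ∀ (n : ℕ) (t : Fin s → ℝ), ((Finset.univ.filter fun j => t j ≠ 0).card ≤ n) →
    (∀ j, 0 ≤ t j) →
    ∃ t' : Fin s → ℝ, (∀ j, 0 ≤ t' j) ∧ (∑ j, t' j • w j = ∑ j, t j • w j) ∧
      LinearIndependent ℝ (fun j : {j : Fin s // t' j ≠ 0} => w j) := by
  classical
  intro n
  induction n with
  | zero =>
    intro t hcard ht
    refine ⟨t, ht, rfl, ?_⟩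
    have hz : ∀ j, t j = 0 := by
      intro j; by_contra h
      have hmem : j ∈ Finset.univ.filter fun j => t j ≠ 0 := by simp [h]
      have := Finset.card_pos.mpr ⟨j, hmem⟩
      omega
    have : IsEmpty {j : Fin s // t j ≠ 0} := ⟨fun ⟨j, hj⟩ => hj (hz j)⟩
    exact linearIndependent_empty_type
  | succ n ih =>
    intro t hcard ht
    by_cases hind : LinearIndependent ℝ (fun j : {j : Fin s // t j ≠ 0} => w j)
    · exact ⟨t, ht, rfl, hind⟩
    obtain ⟨g, hgsum, i0, hgi0⟩ := Fintype.not_linearIndependent_iff.mp hind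
    -- extend g to Fin s
    set gg : Fin s → ℝ := fun j => if h : t j ≠ 0 then g ⟨j, h⟩ else 0 with hggdef
    have hggzero : ∀ j, t j = 0 → gg j = 0 := by
      intro j hj; simp [hggdef, hj]
    have hggsum : ∑ j, gg j • w j = 0 := by
      rw [← Finset.sum_subset (Finset.subset_univ (Finset.univ.filter fun j => t j ≠ 0))
        (by intro x _ hx
            simp only [Finset.mem_filter, Finset.mem_univ, true_and, not_not] at hx
            rw [hggzero x hx, zero_smul])]
      rw [Finset.sum_subtype (p := fun j => t j ≠ 0) _ (by simp) (fun j => gg j • w j)]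
      rw [← hgsum]
      refine Finset.sum_congr rfl fun j _ => ?_
      simp [hggdef, j.2]
    have hggi0 : gg i0.1 ≠ 0 := by simpa [hggdef, i0.2] using hgi0
    -- choose a sign so that some coefficient is positive
    obtain ⟨c, hcsum, hcpos, hczero⟩ :
        ∃ c : Fin s → ℝ, (∑ j, c j • w j = 0) ∧ (∃ j, 0 < c j) ∧
          (∀ j, t j = 0 → c j = 0) := by
      rcases lt_or_gt_of_ne hggi0 with hneg | hpos
      · refine ⟨-gg, by simp [hggsum], ⟨i0.1, by simpa using hneg⟩, fun j hj => by
          simp [hggzero j hj]⟩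
      · exact ⟨gg, hggsum, ⟨i0.1, hpos⟩, hggzero⟩
    -- minimize ratio
    set P : Finset (Fin s) := Finset.univ.filter fun j => 0 < c j with hPdef
    have hPne : P.Nonempty := by
      obtain ⟨j, hj⟩ := hcpos
      exact ⟨j, by simp [hPdef, hj]⟩
    obtain ⟨j0, hj0P, hj0min⟩ := P.exists_min_image (fun j => t j / c j) hPne
    have hcj0 : 0 < c j0 := by simpa [hPdef] using hj0P
    set α : ℝ := t j0 / c j0 with hαdef
    have hα : 0 ≤ α := div_nonneg (ht j0) hcj0.le
    set t' : Fin s → ℝ := fun j => t j - α * c j with ht'def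
    have ht'0 : ∀ j, 0 ≤ t' j := by
      intro j
      by_cases hcj : 0 < c j
      · have h1 := hj0min j (by simp [hPdef, hcj])
        have h2 := mul_le_mul_of_nonneg_right h1 hcj.le
        rw [div_mul_cancel₀ _ hcj.ne'] at h2
        simp only [ht'def]; linarith
      · push_neg at hcj
        have : α * c j ≤ 0 := mul_nonpos_of_nonneg_of_nonpos hα hcj
        have := ht j
        simp only [ht'def]; linarith
    have ht'j0 : t' j0 = 0 := by
      simp only [ht'def, hαdef]
      field_simp
      ring
    have ht'zero : ∀ j, t j = 0 → t' j = 0 := by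
      intro j hj
      simp only [ht'def, hczero j hj, hj]; ring
    have hsum' : ∑ j, t' j • w j = ∑ j, t j • w j := by
      simp only [ht'def, sub_smul, Finset.sum_sub_distrib, mul_smul]
      rw [← Finset.smul_sum, hcsum, smul_zero, sub_zero]
    have hcard' : (Finset.univ.filter fun j => t' j ≠ 0).card ≤ n := by
      have hsub : (Finset.univ.filter fun j => t' j ≠ 0) ⊆
          (Finset.univ.filter fun j => t j ≠ 0).erase j0 := by
        intro j hj
        simp only [Finset.mem_filter, Finset.mem_univ, true_and] at hj
        refine Finset.mem_erase.mpr ⟨?_, ?_⟩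
        · rintro rfl; exact hj ht'j0
        · simp only [Finset.mem_filter, Finset.mem_univ, true_and]
          intro h; exact hj (ht'zero j h)
      have hj0mem : j0 ∈ Finset.univ.filter fun j => t j ≠ 0 := by
        simp only [Finset.mem_filter, Finset.mem_univ, true_and]
        intro h
        exact absurd (hczero j0 h) hcj0.ne'
      have := Finset.card_le_card hsub
      rw [Finset.card_erase_of_mem hj0mem] at this
      omega
    obtain ⟨t'', h1, h2, h3⟩ := ih t' hcard' ht'0
    exact ⟨t'', h1, h2.trans hsum', h3⟩

/-- Restriction of a linearly independent subfamily. -/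
lemma li_mono {E : Type*} [AddCommGroup E] [Module ℝ E] {ι : Type*} (w : ι → E)
    {p q : ι → Prop} (h : ∀ j, p j → q j)
    (hq : LinearIndependent ℝ (fun j : {j // q j} => w j)) :
    LinearIndependent ℝ (fun j : {j // p j} => w j) := by
  have hinj : Function.Injective
      (fun j : {j // p j} => (⟨j.1, h j.1 j.2⟩ : {j // q j})) := by
    intro a b hab
    ext
    simpa [Subtype.mk.injEq] using hab
  exact hq.comp _ hinj

/-- Hoffman-type bound for a finitely generated cone. -/
lemma cone_bound {E : Type*} [NormedAddCommGroup E] [NormedSpace ℝ E]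
    [FiniteDimensional ℝ E] {s : ℕ} (w : Fin s → E) :
    ∃ K : ℝ, 0 < K ∧ ∀ t : Fin s → ℝ, (∀ j, 0 ≤ t j) →
      ∃ t' : Fin s → ℝ, (∀ j, 0 ≤ t' j) ∧ (∑ j, t' j ≤ K * ‖∑ j, t j • w j‖) ∧
        (∑ j, t' j • w j = ∑ j, t j • w j) := by
  classical
  set Z : Set (Fin s → ℝ) :=
    {u : Fin s → ℝ | (∀ j, 0 ≤ u j) ∧ (∑ j, u j = 1) ∧
      LinearIndependent ℝ (fun j : {j : Fin s // u j ≠ 0} => w j)} with hZdef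
  have hZunion : Z = ⋃ (S : Finset (Fin s)),
      ⋃ (_ : LinearIndependent ℝ (fun j : {j : Fin s // j ∈ S} => w j)),
      {u : Fin s → ℝ | (∀ j, 0 ≤ u j) ∧ (∑ j, u j = 1) ∧ ∀ j ∉ S, u j = 0} := by
    ext u
    simp only [Set.mem_iUnion, Set.mem_setOf_eq, hZdef]
    constructor
    · rintro ⟨h1, h2, h3⟩
      refine ⟨Finset.univ.filter fun j => u j ≠ 0, ?_, h1, h2, ?_⟩
      · exact li_mono w (fun j hj => (Finset.mem_filter.mp hj).2) h3
      · intro j hj; simpa using hj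
    · rintro ⟨S, hS, h1, h2, h3⟩
      refine ⟨h1, h2, ?_⟩
      exact li_mono w (fun j hj => by by_contra h; exact hj (h3 j h)) hS
  have hZclosed : IsClosed Z := by
    rw [hZunion]
    refine isClosed_iUnion_of_finite fun S => isClosed_iUnion_of_finite fun _ => ?_
    have h1 : IsClosed {u : Fin s → ℝ | ∀ j, 0 ≤ u j} := by
      have : {u : Fin s → ℝ | ∀ j, 0 ≤ u j} = ⋂ j, {u | 0 ≤ u j} := by ext u; simp
      rw [this]
      exact isClosed_iInter fun j => isClosed_le continuous_const (continuous_apply j)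
    have h2 : IsClosed {u : Fin s → ℝ | ∑ j, u j = 1} :=
      isClosed_eq (continuous_finset_sum _ fun j _ => continuous_apply j) continuous_const
    have h3 : IsClosed {u : Fin s → ℝ | ∀ j ∉ S, u j = 0} := by
      have : {u : Fin s → ℝ | ∀ j ∉ S, u j = 0} = ⋂ (j) (_ : j ∉ S), {u | u j = 0} := by
        ext u; simp
      rw [this]
      exact isClosed_iInter fun j => isClosed_iInter fun _ =>
        isClosed_eq (continuous_apply j) continuous_const
    have heq : {u : Fin s → ℝ | (∀ j, 0 ≤ u j) ∧ (∑ j, u j = 1) ∧ ∀ j ∉ S, u j = 0}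
        = {u : Fin s → ℝ | ∀ j, 0 ≤ u j} ∩ ({u | ∑ j, u j = 1} ∩ {u | ∀ j ∉ S, u j = 0}) := by
      ext u; simp [Set.mem_setOf_eq, and_assoc]
    rw [heq]
    exact h1.inter (h2.inter h3)
  have hZcompact : IsCompact Z := by
    refine (isCompact_stdSimplex ℝ (Fin s)).of_isClosed_subset hZclosed ?_
    rintro u ⟨h1, h2, _⟩
    exact ⟨h1, h2⟩
  have hZnonzero : ∀ u ∈ Z, ∑ j, u j • w j ≠ 0 := by
    rintro u ⟨h1, h2, h3⟩ hsum
    have hsub : ∑ j : {j : Fin s // u j ≠ 0}, u j.1 • w j.1 = 0 := by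
      rw [← Finset.sum_subtype (p := fun j => u j ≠ 0)
        (Finset.univ.filter fun j => u j ≠ 0) (by simp) (fun j => u j • w j)]
      rw [← hsum]
      exact Finset.sum_subset (Finset.subset_univ _) (by
        intro x _ hx
        simp only [Finset.mem_filter, Finset.mem_univ, true_and, not_not] at hx
        rw [hx, zero_smul])
    have hz := Fintype.linearIndependent_iff.mp h3 (fun j => u j.1) hsub
    have hall : ∀ j, u j = 0 := by
      intro j
      by_cases h : u j = 0
      · exact h
      · exact hz ⟨j, h⟩
    simp [hall] at h2
  have hcont : Continuous fun u : Fin s → ℝ => ∑ j, u j • w j :=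
    continuous_finset_sum _ fun j _ => (continuous_apply j).smul continuous_const
  by_cases hZne : Z.Nonempty
  · obtain ⟨u₀, hu₀Z, hu₀min⟩ := hZcompact.exists_isMinOn hZne hcont.norm.continuousOn
    set ρ : ℝ := ‖∑ j, u₀ j • w j‖ with hρdef
    have hρpos : 0 < ρ := by
      rw [hρdef, norm_pos_iff]
      exact hZnonzero u₀ hu₀Z
    refine ⟨ρ⁻¹, inv_pos.mpr hρpos, fun t ht => ?_⟩
    obtain ⟨t', ht'0, ht'sum, ht'ind⟩ := conic_carath w
      ((Finset.univ.filter fun j => t j ≠ 0).card) t le_rfl ht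
    refine ⟨t', ht'0, ?_, ht'sum⟩
    rw [← ht'sum]
    set σ : ℝ := ∑ j, t' j with hσdef
    have hσ0 : 0 ≤ σ := Finset.sum_nonneg fun j _ => ht'0 j
    rcases eq_or_lt_of_le hσ0 with hσz | hσpos
    · rw [← hσz]; positivity
    · set u : Fin s → ℝ := fun j => σ⁻¹ * t' j with hudef
      have huZ : u ∈ Z := by
        refine ⟨fun j => mul_nonneg (inv_nonneg.mpr hσ0) (ht'0 j), ?_, ?_⟩
        · rw [hudef]
          simp only [← Finset.mul_sum, ← hσdef]
          field_simp
        · refine li_mono w (fun j hj => ?_) ht'ind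
          intro h
          apply hj
          rw [hudef]
          simp [h]
      have hmin := isMinOn_iff.mp hu₀min u huZ
      have huw : ∑ j, u j • w j = σ⁻¹ • ∑ j, t' j • w j := by
        rw [Finset.smul_sum]
        exact Finset.sum_congr rfl fun j _ => by rw [hudef, smul_smul]
      rw [huw, norm_smul, Real.norm_eq_abs, abs_of_nonneg (inv_nonneg.mpr hσ0)] at hmin
      -- ρ ≤ σ⁻¹ * ‖x‖  ⇒  σ ≤ ρ⁻¹ * ‖x‖
      rw [← hρdef] at hmin
      have := mul_le_mul_of_nonneg_left hmin hσ0
      rw [mul_inv_cancel_left₀ hσpos.ne'] at this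
      calc σ = ρ⁻¹ * (ρ * σ) := by field_simp
        _ ≤ ρ⁻¹ * ‖∑ j, t' j • w j‖ := by
            apply mul_le_mul_of_nonneg_left _ (inv_nonneg.mpr hρpos.le)
            calc ρ * σ = σ * ρ := mul_comm _ _
              _ ≤ ‖∑ j, t' j • w j‖ := this
  · refine ⟨1, one_pos, fun t ht => ?_⟩
    obtain ⟨t', ht'0, ht'sum, ht'ind⟩ := conic_carath w
      ((Finset.univ.filter fun j => t j ≠ 0).card) t le_rfl ht
    have hσ : ∑ j, t' j = 0 := by
      by_contra hσ
      have hσpos : 0 < ∑ j, t' j :=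
        lt_of_le_of_ne (Finset.sum_nonneg fun j _ => ht'0 j) (Ne.symm hσ)
      apply hZne
      refine ⟨fun j => (∑ i, t' i)⁻¹ * t' j,
        fun j => mul_nonneg (inv_nonneg.mpr hσpos.le) (ht'0 j), ?_, ?_⟩
      · simp only [← Finset.mul_sum]
        field_simp
      · refine li_mono w (fun j hj => ?_) ht'ind
        intro h
        apply hj
        simp [h]
    exact ⟨t', ht'0, by rw [hσ]; positivity, ht'sum⟩

/-- Continuity of the value function of an affinely constrained maximization
problem: if `ℍ(c) = {ν ≥ 0 : Mν = c}` is nonempty and contained in the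
probability simplex for every `c` in a compact convex set `C`, `F̄` is
continuous on the simplex, and `F(c)` is the maximum of `F̄` over `ℍ(c)`,
then `F(bₙ) → F(b)` along any sequence `bₙ → b` in `C`. -/
theorem stmt14 (r s : ℕ) (M : Matrix (Fin r) (Fin s) ℝ)
    (C : Set (Fin r → ℝ)) (hCc : IsCompact C) (hCv : Convex ℝ C)
    (b : Fin r → ℝ) (hb : b ∈ C)
    (bn : ℕ → Fin r → ℝ) (hbn : ∀ n, bn n ∈ C)
    (hlim : Filter.Tendsto bn Filter.atTop (nhds b))
    (hfeas : ∀ c ∈ C,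
      {ν : Fin s → ℝ | (∀ x, 0 ≤ ν x) ∧ M.mulVec ν = c}.Nonempty ∧
      {ν : Fin s → ℝ | (∀ x, 0 ≤ ν x) ∧ M.mulVec ν = c}
        ⊆ {ν : Fin s → ℝ | (∀ x, 0 ≤ ν x) ∧ ∑ x, ν x = 1})
    (Fbar : (Fin s → ℝ) → ℝ)
    (hFbar : ContinuousOn Fbar {ν : Fin s → ℝ | (∀ x, 0 ≤ ν x) ∧ ∑ x, ν x = 1})
    (F : (Fin r → ℝ) → ℝ)
    (hF : ∀ c ∈ C,
      IsGreatest (Fbar '' {ν : Fin s → ℝ | (∀ x, 0 ≤ ν x) ∧ M.mulVec ν = c}) (F c)) :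
    Filter.Tendsto (fun n => F (bn n)) Filter.atTop (nhds (F b)) := by
  classical
  set Δ : Set (Fin s → ℝ) := {ν : Fin s → ℝ | (∀ x, 0 ≤ ν x) ∧ ∑ x, ν x = 1} with hΔdef
  have hΔclosed : IsClosed Δ := isClosed_stdSimplex ℝ (Fin s)
  have hΔcompact : IsCompact Δ := isCompact_stdSimplex ℝ (Fin s)
  set m : Fin s → (Fin r → ℝ) := fun j => M.mulVec (Pi.single j 1) with hmdef
  have hmulVec : ∀ ν : Fin s → ℝ, M.mulVec ν = ∑ j, ν j • m j := by
    intro ν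
    have hν : ν = ∑ j, ν j • (Pi.single j 1 : Fin s → ℝ) := by
      funext i
      simp [Finset.sum_apply, Pi.single_apply]
    calc M.mulVec ν = M.mulVecLin ν := (M.mulVecLin_apply ν).symm
      _ = M.mulVecLin (∑ j, ν j • (Pi.single j 1 : Fin s → ℝ)) := by rw [← hν]
      _ = ∑ j, ν j • m j := by
          rw [map_sum]
          simp [hmdef, Matrix.mulVecLin_apply]
  obtain ⟨hFbmem, hFbub⟩ := hF b hb
  obtain ⟨νs, hνsH, hνsval⟩ := hFbmem
  have hνsΔ : νs ∈ Δ := (hfeas b hb).2 hνsH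
  set w : Fin s → (Fin r → ℝ) := fun j => m j - b with hwdef
  obtain ⟨K, hK, hKspec⟩ := cone_bound w
  rw [Metric.tendsto_nhds]
  intro ε hε
  -- upper bound, by compactness
  have hmulcont : Continuous fun ν : Fin s → ℝ => M.mulVec ν := by
    have h := (M.mulVecLin).continuous_of_finiteDimensional
    exact h
  have hupper : ∀ᶠ n in Filter.atTop, F (bn n) < F b + ε := by
    set S : Set (Fin s → ℝ) := Δ ∩ Fbar ⁻¹' {y | F b + ε ≤ y} with hSdef
    have hScl : IsClosed S :=
      hFbar.preimage_isClosed_of_isClosed hΔclosed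
        (isClosed_le continuous_const continuous_id)
    have hScomp : IsCompact S :=
      hΔcompact.of_isClosed_subset hScl Set.inter_subset_left
    set T : Set (Fin r → ℝ) := (fun ν => M.mulVec ν) '' S with hTdef
    have hTcomp : IsCompact T := hScomp.image hmulcont
    have hbT : b ∉ T := by
      rintro ⟨ν, ⟨hνΔ, hνF⟩, hνb⟩
      have h1 : Fbar ν ≤ F b := hFbub ⟨ν, ⟨hνΔ.1, hνb⟩, rfl⟩
      have h2 : F b + ε ≤ Fbar ν := hνF
      linarith
    have hopen : Tᶜ ∈ nhds b := hTcomp.isClosed.isOpen_compl.mem_nhds hbT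
    have hev : ∀ᶠ n in Filter.atTop, bn n ∈ Tᶜ := hlim hopen
    filter_upwards [hev] with n hn
    obtain ⟨νn, hνnH, hνnval⟩ := (hF (bn n) (hbn n)).1
    have hνnΔ : νn ∈ Δ := (hfeas (bn n) (hbn n)).2 hνnH
    by_contra hcon
    push_neg at hcon
    apply hn
    refine ⟨νn, ⟨hνnΔ, ?_⟩, hνnH.2⟩
    show F b + ε ≤ Fbar νn
    rw [hνnval]
    exact hcon
  -- lower bound, by the cone bound
  have hlower : ∀ᶠ n in Filter.atTop, F b - ε < F (bn n) := by
    have hcw : ContinuousWithinAt Fbar Δ νs := hFbar νs hνsΔ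
    obtain ⟨δ, hδ, hδspec⟩ := Metric.continuousWithinAt_iff.mp hcw ε hε
    set B : ℝ := 1 + ‖νs‖ with hBdef
    have hBpos : 0 < B := by positivity
    set η : ℝ := min (δ / (K * B)) (1 / K) with hηdef
    have hηpos : 0 < η := lt_min (by positivity) (by positivity)
    have hev := Metric.tendsto_nhds.mp hlim η hηpos
    filter_upwards [hev] with n hn
    obtain ⟨μ, hμH⟩ := (hfeas (bn n) (hbn n)).1
    have hμΔ : μ ∈ Δ := (hfeas (bn n) (hbn n)).2 hμH
    have hdecomp : ∑ j, μ j • w j = bn n - b := by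
      simp only [hwdef, smul_sub, Finset.sum_sub_distrib]
      rw [← hmulVec μ, hμH.2, ← Finset.sum_smul, hμΔ.2, one_smul]
    obtain ⟨t', ht'0, ht'bd, ht'sum⟩ := hKspec μ hμH.1
    rw [hdecomp] at ht'bd ht'sum
    have hbnb : ‖bn n - b‖ < η := by
      rw [← dist_eq_norm]; exact hn
    set σ : ℝ := ∑ j, t' j with hσdef
    have hσ0 : 0 ≤ σ := Finset.sum_nonneg fun j _ => ht'0 j
    have hσb : σ ≤ K * ‖bn n - b‖ := ht'bd
    have hσ1 : σ ≤ 1 := by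
      have h1 : ‖bn n - b‖ ≤ 1 / K := le_of_lt (lt_of_lt_of_le hbnb (min_le_right _ _))
      have h2 : K * ‖bn n - b‖ ≤ K * (1 / K) := mul_le_mul_of_nonneg_left h1 hK.le
      rw [mul_one_div, div_self hK.ne'] at h2
      linarith
    set ν' : Fin s → ℝ := fun i => (1 - σ) * νs i + t' i with hν'def
    have hν'0 : ∀ i, 0 ≤ ν' i := fun i =>
      add_nonneg (mul_nonneg (by linarith) (hνsΔ.1 i)) (ht'0 i)
    have hν'sum : ∑ i, ν' i = 1 := by
      simp only [hν'def, Finset.sum_add_distrib, ← Finset.mul_sum, hνsΔ.2, ← hσdef]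
      ring
    have hν'Δ : ν' ∈ Δ := ⟨hν'0, hν'sum⟩
    have hν'mul : M.mulVec ν' = bn n := by
      rw [hmulVec]
      have h1 : ∑ i, ν' i • m i = (1 - σ) • (∑ i, νs i • m i) + ∑ i, t' i • m i := by
        rw [Finset.smul_sum, ← Finset.sum_add_distrib]
        refine Finset.sum_congr rfl fun i _ => ?_
        simp only [hν'def, add_smul, smul_smul]
      have h2 : ∑ i, t' i • m i = (bn n - b) + σ • b := by
        have hwm : ∑ i, t' i • w i = (∑ i, t' i • m i) - σ • b := by
          simp only [hwdef, smul_sub, Finset.sum_sub_distrib, ← Finset.sum_smul, ← hσdef]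
        rw [hwm] at ht'sum
        exact sub_eq_iff_eq_add.mp ht'sum
      have h3 : ∑ i, νs i • m i = b := by rw [← hmulVec, hνsH.2]
      rw [h1, h2, h3]
      module
    have hdist : dist ν' νs < δ := by
      rw [dist_eq_norm]
      have hdiff : ν' - νs = t' - σ • νs := by
        funext i
        simp only [Pi.sub_apply, hν'def, Pi.smul_apply, smul_eq_mul]
        ring
      rw [hdiff]
      have h1 : ‖t'‖ ≤ σ := by
        rw [pi_norm_le_iff_of_nonneg hσ0]
        intro i
        rw [Real.norm_eq_abs, abs_of_nonneg (ht'0 i)]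
        exact Finset.single_le_sum (fun j _ => ht'0 j) (Finset.mem_univ i)
      have h2 : ‖σ • νs‖ = σ * ‖νs‖ := by
        rw [norm_smul, Real.norm_eq_abs, abs_of_nonneg hσ0]
      have hb2 : ‖bn n - b‖ < δ / (K * B) := lt_of_lt_of_le hbnb (min_le_left _ _)
      calc ‖t' - σ • νs‖ ≤ ‖t'‖ + ‖σ • νs‖ := norm_sub_le _ _
        _ ≤ σ + σ * ‖νs‖ := by rw [h2]; linarith
        _ = σ * B := by rw [hBdef]; ring
        _ ≤ (K * ‖bn n - b‖) * B := mul_le_mul_of_nonneg_right hσb hBpos.le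
        _ < δ := by
            have h3 : K * ‖bn n - b‖ * B < K * (δ / (K * B)) * B := by
              have := mul_lt_mul_of_pos_left hb2 hK
              exact mul_lt_mul_of_pos_right this hBpos
            have h4 : K * (δ / (K * B)) * B = δ := by
              field_simp
            exact lt_of_lt_of_eq h3 h4
    have hclose := hδspec hν'Δ hdist
    have hFle : Fbar ν' ≤ F (bn n) := (hF (bn n) (hbn n)).2 ⟨ν', ⟨hν'0, hν'mul⟩, rfl⟩
    rw [Real.dist_eq] at hclose
    have habs := abs_lt.mp hclose
    rw [hνsval] at habs
    linarith [habs.1]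
  filter_upwards [hupper, hlower] with n h1 h2
  rw [Real.dist_eq, abs_lt]
  constructor <;> linarith
end

section
/- Let ψ(ρ) = H(ρ) − (log 2)·(1 − ρ^k − (1−ρ)^k) where H is the binary entropy with natural logarithm. For every δ ∈ (0,1] there exists k₀ such that for all k ≥ k₀ and all ρ with 1/k ≤ |2ρ−1| ≤ 1 − δ, one has ψ(ρ) ≤ −1/(4k²). -/
open Real Set Filter

lemma lemA (t : ℝ) (ht : 0 ≤ t) : t - t^2/2 ≤ Real.log (1+t) := by
  have mono : MonotoneOn (fun x : ℝ => Real.log (1+x) - x + x^2/2) (Ici 0) := by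
    have hderiv : ∀ x : ℝ, 0 < x →
        HasDerivAt (fun x : ℝ => Real.log (1+x) - x + x^2/2)
          (1/(1+x) - 1 + x) x := by
      intro x hx
      have h1 : HasDerivAt (fun x : ℝ => 1 + x) 1 x := by
        simpa using (hasDerivAt_id x).const_add 1
      have h2 : HasDerivAt (fun x : ℝ => Real.log (1+x)) (1/(1+x)) x := by
        have := (Real.hasDerivAt_log (by linarith : (1:ℝ)+x ≠ 0)).comp x h1
        simpa [one_div, Function.comp_def] using this
      have h3 : HasDerivAt (fun x : ℝ => x^2/2) x x := by
        simpa using (hasDerivAt_pow 2 x).div_const 2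
      exact (h2.sub (hasDerivAt_id x)).add h3
    apply monotoneOn_of_deriv_nonneg (convex_Ici 0)
    · apply ContinuousOn.add (ContinuousOn.sub ?_ continuousOn_id) (by fun_prop)
      apply ContinuousOn.log (by fun_prop)
      intro x hx
      simp only [mem_Ici] at hx
      intro h
      nlinarith
    · intro x hx
      rw [interior_Ici] at hx
      exact (hderiv x hx).differentiableAt.differentiableWithinAt
    · intro x hx
      rw [interior_Ici] at hx
      rw [(hderiv x hx).deriv]
      have h1 : (0:ℝ) < 1 + x := by linarith [mem_Ioi.1 hx]
      have h2 : 1/(1+x) - 1 + x = x^2/(1+x) := by field_simp; ring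
      rw [h2]
      positivity
  have h := mono (self_mem_Ici) (mem_Ici.2 ht) ht
  simp only [add_zero, Real.log_one] at h
  nlinarith [h]

lemma lemB (u : ℝ) (hu0 : 0 < u) (hu1 : u ≤ 1) : (u^2 - 1)/2 ≤ u * Real.log u := by
  have anti : AntitoneOn (fun x : ℝ => Real.log x - x/2 + 1/(2*x)) (Ioi 0) := by
    have hderiv : ∀ x : ℝ, 0 < x →
        HasDerivAt (fun x : ℝ => Real.log x - x/2 + 1/(2*x))
          (1/x - 1/2 + (-(2) / (2*x)^2)) x := by
      intro x hx
      have h1 : HasDerivAt (fun x : ℝ => Real.log x) (1/x) x := by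
        simpa [one_div] using Real.hasDerivAt_log (ne_of_gt hx)
      have h2 : HasDerivAt (fun x : ℝ => x/2) (1/2) x := (hasDerivAt_id x).div_const 2
      have h3 : HasDerivAt (fun x : ℝ => 2*x) 2 x := by
        simpa using (hasDerivAt_id x).const_mul 2
      have h4 : HasDerivAt (fun x : ℝ => 1/(2*x)) (-(2)/(2*x)^2) x := by
        rw [show (fun x : ℝ => 1/(2*x)) = (fun x => 2*x)⁻¹ from by ext y; simp only [Pi.inv_apply, one_div]]
        exact h3.inv (by positivity)
      exact (h1.sub h2).add h4
    apply antitoneOn_of_deriv_nonpos (convex_Ioi 0)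
    · apply ContinuousOn.add (ContinuousOn.sub ?_ (by fun_prop)) ?_
      · exact Real.continuousOn_log.mono (by intro x hx; simpa using ne_of_gt hx)
      · apply ContinuousOn.div continuousOn_const (by fun_prop)
        intro x hx
        simp only [mem_Ioi] at hx
        positivity
    · intro x hx
      rw [interior_Ioi] at hx
      exact (hderiv x hx).differentiableAt.differentiableWithinAt
    · intro x hx
      rw [interior_Ioi] at hx
      rw [(hderiv x hx).deriv]
      have h1 : (0:ℝ) < x := hx
      have key : 1/x - 1/2 + (-(2)/(2*x)^2) = -((x-1)^2) / (2*x^2) := by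
        field_simp; ring
      rw [key]
      apply div_nonpos_of_nonpos_of_nonneg (by nlinarith) (by positivity)
  have h := anti (mem_Ioi.2 hu0) (mem_Ioi.2 one_pos) hu1
  simp only [Real.log_one] at h
  have h' : 0 ≤ Real.log u - u/2 + 1/(2*u) := by
    have e : (0:ℝ) - 1/2 + 1/(2*1) = 0 := by norm_num
    linarith
  have h3 : u * (1/(2*u)) = 1/2 := by field_simp
  nlinarith [mul_nonneg hu0.le h']

lemma polyLem (δ t c : ℝ) (hδ0 : 0 < δ) (hc : 0 < c) (h1 : c ≤ t) (h2 : t ≤ 1 - δ) :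
    (1+δ)*c^2/4 ≤ (t^2 - t^3/2)/2 := by
  have e1 : c*c ≤ t*t := mul_le_mul h1 h1 hc.le (le_trans hc.le h1)
  have e2 : t^2*t ≤ t^2*(1-δ) := mul_le_mul_of_nonneg_left h2 (sq_nonneg t)
  have e3 : 0 ≤ δ * (t*t - c*c) := mul_nonneg hδ0.le (by linarith)
  nlinarith [e1, e2, e3]

lemma keyLem (δ : ℝ) (hδ0 : 0 < δ) (hδ1 : δ ≤ 1) (k : ℕ) (hk : 1 ≤ k)
    (hE : 8 * Real.log 2 * ((k:ℝ)^2 * (1 - δ/2)^k) ≤ δ)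
    (ρ : ℝ) (ht1 : 1/(k:ℝ) ≤ 2*ρ - 1) (ht2 : 2*ρ - 1 ≤ 1 - δ) :
    (-ρ * Real.log ρ - (1 - ρ) * Real.log (1 - ρ))
        - Real.log 2 * (1 - ρ ^ k - (1 - ρ) ^ k) ≤ -1/(4*(k:ℝ)^2) := by
  have hk0 : (0:ℝ) < k := by exact_mod_cast hk
  have hck : (0:ℝ) < 1/(k:ℝ) := by positivity
  have ht0 : 0 < 2*ρ - 1 := lt_of_lt_of_le hck ht1
  have hρ0 : 0 < ρ := by linarith
  have hρ1 : ρ < 1 := by linarith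
  have hlog2pos : 0 < Real.log 2 := Real.log_pos (by norm_num)
  -- entropy bound
  have A := lemA (2*ρ-1) ht0.le
  rw [show (1:ℝ)+(2*ρ-1) = 2*ρ by ring,
      Real.log_mul two_ne_zero (ne_of_gt hρ0)] at A
  have A2 := mul_le_mul_of_nonneg_left A (by positivity : (0:ℝ) ≤ 2*ρ)
  have B := lemB (2*(1-ρ)) (by linarith) (by linarith)
  rw [Real.log_mul two_ne_zero (by intro h; nlinarith : (1:ℝ)-ρ ≠ 0)] at B
  have hH : -ρ * Real.log ρ - (1-ρ) * Real.log (1-ρ)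
      ≤ Real.log 2 - ((2*ρ-1)^2 - (2*ρ-1)^3/2)/2 := by nlinarith [A2, B]
  have hpoly := polyLem δ (2*ρ-1) (1/(k:ℝ)) hδ0 hck ht1 ht2
  -- tail bound
  have hp1 : ρ^k ≤ (1-δ/2)^k := pow_le_pow_left₀ hρ0.le (by linarith) k
  have hp2 : (1-ρ)^k ≤ (1-δ/2)^k := pow_le_pow_left₀ (by linarith) (by linarith) k
  have hEk : Real.log 2 * (ρ^k + (1-ρ)^k) ≤ δ/(4*(k:ℝ)^2) := by
    have h1 : Real.log 2 * (ρ^k + (1-ρ)^k) ≤ Real.log 2 * (2*(1-δ/2)^k) :=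
      mul_le_mul_of_nonneg_left (by linarith) hlog2pos.le
    rw [le_div_iff₀ (by positivity : (0:ℝ) < 4*(k:ℝ)^2)]
    have h2 := mul_le_mul_of_nonneg_right h1 (by positivity : (0:ℝ) ≤ 4*(k:ℝ)^2)
    nlinarith [h2, hE]
  have hc2 : (1+δ)*(1/(k:ℝ))^2/4 = (1+δ)/(4*(k:ℝ)^2) := by
    rw [div_pow, one_pow]; ring
  rw [hc2] at hpoly
  ring_nf at hpoly hEk hH ⊢
  linarith [hH, hpoly, hEk]


/-- Negativity of `ψ(ρ) = H(ρ) − (log 2)·(1 − ρ^k − (1−ρ)^k)` for intermediate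
overlaps: for every `δ ∈ (0,1]` there is `k₀` such that for all `k ≥ k₀` and
all `ρ` with `1/k ≤ |2ρ−1| ≤ 1−δ`, one has `ψ(ρ) ≤ −1/(4k²)`. -/
theorem stmt17 (δ : ℝ) (hδ0 : 0 < δ) (hδ1 : δ ≤ 1) :
    ∃ k₀ : ℕ, ∀ k : ℕ, k₀ ≤ k → ∀ ρ : ℝ,
      1 / (k : ℝ) ≤ |2 * ρ - 1| → |2 * ρ - 1| ≤ 1 - δ →
      (-ρ * Real.log ρ - (1 - ρ) * Real.log (1 - ρ))
          - Real.log 2 * (1 - ρ ^ k - (1 - ρ) ^ k)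
        ≤ -1 / (4 * (k : ℝ) ^ 2) := by
  have hlog2pos : 0 < Real.log 2 := Real.log_pos (by norm_num)
  have hεpos : 0 < δ / (8 * Real.log 2) := by positivity
  have htend := tendsto_pow_const_mul_const_pow_of_lt_one 2
    (by linarith : (0:ℝ) ≤ 1 - δ/2) (by linarith : (1:ℝ) - δ/2 < 1)
  have hev : ∀ᶠ n : ℕ in atTop, (n:ℝ)^2 * (1-δ/2)^n ≤ δ/(8*Real.log 2) :=
    htend.eventually (eventually_le_nhds hεpos)
  obtain ⟨k₁, hk₁⟩ := eventually_atTop.1 hev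
  refine ⟨max k₁ 1, fun k hk ρ h1 h2 => ?_⟩
  have hk1 : 1 ≤ k := le_trans (le_max_right _ _) hk
  have hE : 8 * Real.log 2 * ((k:ℝ)^2 * (1 - δ/2)^k) ≤ δ := by
    have h := hk₁ k (le_trans (le_max_left _ _) hk)
    have h' := mul_le_mul_of_nonneg_left h (by positivity : (0:ℝ) ≤ 8 * Real.log 2)
    have e : 8 * Real.log 2 * (δ/(8*Real.log 2)) = δ := by
      field_simp
    linarith
  rcases le_or_gt 0 (2*ρ - 1) with hs | hs
  · rw [abs_of_nonneg hs] at h1 h2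
    exact keyLem δ hδ0 hδ1 k hk1 hE ρ h1 h2
  · rw [abs_of_neg hs] at h1 h2
    have h := keyLem δ hδ0 hδ1 k hk1 hE (1-ρ) (by linarith) (by linarith)
    rw [sub_sub_cancel] at h
    linarith
end
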